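/- (Theorem 4.1.) Let ξ be a real random variable, λ > 0 with E exp(λξ) < ∞, and φ₁(λ) a number with E exp(λξ) ≥ exp(φ₁(λ)). Let g : ℝ → ℝ be a convex differentiable function such that P(ξ > x) ≤ exp(−g(x)) for all x ∈ ℝ, and set S(x) = λx − g(x), a concave differentiable function. Let x_− < x_+ be points with S'(x_−) > 0 and S'(x_+) < 0. Then P(ξ > x_−) ≥ e^{−λ x_+} · [ e^{φ₁(λ)} − λ·e^{S(x_−)}/S'(x_−) − λ·e^{S(x_+)}/|S'(x_+)| ]. -/

import Mathlib

open MeasureTheory ProbabilityTheory Real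
open scoped ENNReal

private lemma convex_tangent_line {g : ℝ → ℝ} (hc : ConvexOn ℝ Set.univ g)
    (hd : Differentiable ℝ g) (x y : ℝ) :
    g x + deriv g x * (y - x) ≤ g y := by
  rcases lt_trichotomy x y with h | h | h
  · have h1 := hc.deriv_le_slope (Set.mem_univ x) (Set.mem_univ y) h (hd x)
    rw [slope_def_field] at h1
    rw [le_div_iff₀ (by linarith : (0:ℝ) < y - x)] at h1
    linarith
  · subst h; simp
  · have h1 := hc.slope_le_deriv (Set.mem_univ y) (Set.mem_univ x) h (hd x)
    rw [slope_def_field] at h1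
    rw [div_le_iff₀ (by linarith : (0:ℝ) < x - y)] at h1
    have h2 : deriv g x * (y - x) = -(deriv g x * (x - y)) := by ring
    linarith

theorem tail_lower_bound_bilateral {Ω : Type*} [MeasureSpace Ω]
    [IsProbabilityMeasure (ℙ : Measure Ω)]
    (ξ : Ω → ℝ) (hξ : Measurable ξ)
    (l : ℝ) (hl : 0 < l)
    (hint : Integrable (fun ω => Real.exp (l * ξ ω)) ℙ)
    (φ₁ : ℝ) (hmgf : Real.exp φ₁ ≤ ∫ ω, Real.exp (l * ξ ω))
    (g : ℝ → ℝ) (hg_convex : ConvexOn ℝ Set.univ g) (hg_diff : Differentiable ℝ g)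
    (htail : ∀ x : ℝ, (ℙ {ω | x < ξ ω}).toReal ≤ Real.exp (-g x))
    (S : ℝ → ℝ) (hS : S = fun x => l * x - g x)
    (xm xp : ℝ) (hx : xm < xp)
    (hSm : 0 < deriv S xm) (hSp : deriv S xp < 0) :
    Real.exp (-(l * xp)) *
        (Real.exp φ₁ - l * Real.exp (S xm) / deriv S xm
          - l * Real.exp (S xp) / |deriv S xp|) ≤
      (ℙ {ω | xm < ξ ω}).toReal := by
  have hl' : l ≠ 0 := ne_of_gt hl
  -- derivative of S
  have hSd : ∀ x, HasDerivAt S (l - deriv g x) x := by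
    intro x
    rw [hS]
    exact (((hasDerivAt_id' x).const_mul l).sub (hg_diff x).hasDerivAt).congr_deriv (by ring)
  -- tangent line inequality for the concave function S
  have hStan : ∀ x y : ℝ, S y ≤ S x + deriv S x * (y - x) := by
    intro x y
    have hgt := convex_tangent_line hg_convex hg_diff x y
    have hdx : deriv S x = l - deriv g x := (hSd x).deriv
    rw [hdx, hS]
    simp only []
    nlinarith [hgt]
  set η : Ω → ℝ := fun ω => Real.exp (l * ξ ω) with hη
  have hηnn : ∀ ω, 0 ≤ η ω := fun ω => (Real.exp_pos _).le
  set cm := Real.exp (l * xm) with hcm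
  set cp := Real.exp (l * xp) with hcp
  have hcm0 : (0:ℝ) < cm := Real.exp_pos _
  have hcp0 : (0:ℝ) < cp := Real.exp_pos _
  set A : Set Ω := {ω | ξ ω ≤ xm} with hA
  have hAm : MeasurableSet A := measurableSet_le hξ measurable_const
  have hf1i : Integrable (A.indicator η) ℙ := hint.indicator hAm
  have hf2i : Integrable (Aᶜ.indicator η) ℙ := hint.indicator hAm.compl
  have hsplit : ∫ ω, η ω = (∫ ω, A.indicator η ω) + ∫ ω, Aᶜ.indicator η ω := by
    rw [← integral_add hf1i hf2i]
    apply integral_congr_ae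
    filter_upwards with ω
    have := congrFun (Set.indicator_self_add_compl A η) ω
    simpa using this.symm
  -- tail sets
  have hset : ∀ t : ℝ, 0 < t → {ω | t < η ω} = {ω | Real.log t / l < ξ ω} := by
    intro t ht
    ext ω
    simp only [Set.mem_setOf_eq, hη]
    constructor
    · intro h
      rw [div_lt_iff₀ hl, mul_comm]
      exact (Real.log_lt_iff_lt_exp ht).mpr h
    · intro h
      rw [div_lt_iff₀ hl, mul_comm] at h
      exact (Real.log_lt_iff_lt_exp ht).mp h
  have htailt : ∀ t : ℝ, 0 < t →
      (ℙ {ω | t < η ω}).toReal ≤ Real.exp (S (Real.log t / l) - l * (Real.log t / l)) := by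
    intro t ht
    rw [hset t ht]
    have hh : S (Real.log t / l) - l * (Real.log t / l) = -g (Real.log t / l) := by
      rw [hS]; ring
    rw [hh]
    exact htail _
  -- key pointwise bound via the tangent line at a point x
  have hkey : ∀ (x t : ℝ), 0 < t →
      (ℙ {ω | t < η ω}).toReal
        ≤ Real.exp (S x - deriv S x * x) * t ^ (deriv S x / l - 1) := by
    intro x t ht
    refine (htailt t ht).trans ?_
    rw [Real.rpow_def_of_pos ht, ← Real.exp_add]
    apply Real.exp_le_exp.mpr
    have h1 := hStan x (Real.log t / l)
    have h2 : deriv S x * (Real.log t / l - x)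
        = deriv S x * (Real.log t / l) - deriv S x * x := by ring
    have h3 : Real.log t * (deriv S x / l - 1)
        = deriv S x * (Real.log t / l) - Real.log t := by field_simp
    have h4 : l * (Real.log t / l) = Real.log t := by field_simp
    linarith
  have hmeas_le : ∀ (s u : Set Ω), s ⊆ u → (ℙ s).toReal ≤ (ℙ u).toReal := by
    intro s u hsu
    exact ENNReal.toReal_le_toReal (measure_ne_top _ _) (measure_ne_top _ _) |>.mpr
      (measure_mono hsu)
  -- the first piece
  have hA1 : (∫ ω, A.indicator η ω) ≤ l * Real.exp (S xm) / deriv S xm := by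
    set p := deriv S xm / l with hp
    have hp0 : 0 < p := div_pos hSm hl
    have hcover : (∫ ω, A.indicator η ω)
        = ∫ t in Set.Ioi (0:ℝ), (ℙ {ω | t < A.indicator η ω}).toReal :=
      hf1i.integral_eq_integral_meas_lt
        (Filter.Eventually.of_forall fun ω => Set.indicator_nonneg (fun x _ => hηnn x) ω)
    set ψ : ℝ → ℝ := fun t => Real.exp (S xm - deriv S xm * xm) * t ^ (p - 1) with hψ
    set φ : ℝ → ℝ := (Set.Ioc (0:ℝ) cm).indicator ψ with hφ
    have hψint : IntegrableOn ψ (Set.Ioc (0:ℝ) cm) := by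
      apply Integrable.const_mul
      have h := intervalIntegral.intervalIntegrable_rpow' (a := 0) (b := cm)
        (by linarith : (-1:ℝ) < p - 1)
      rwa [intervalIntegrable_iff_integrableOn_Ioc_of_le hcm0.le] at h
    have hφint : Integrable φ ((volume : Measure ℝ).restrict (Set.Ioi 0)) := by
      rw [hφ, integrable_indicator_iff measurableSet_Ioc]
      rw [IntegrableOn, Measure.restrict_restrict measurableSet_Ioc,
        Set.inter_eq_self_of_subset_left Set.Ioc_subset_Ioi_self]
      exact hψint
    have hmono : ∀ t ∈ Set.Ioi (0:ℝ), (ℙ {ω | t < A.indicator η ω}).toReal ≤ φ t := by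
      intro t ht
      simp only [Set.mem_Ioi] at ht
      by_cases htc : t ≤ cm
      · have hsub : {ω | t < A.indicator η ω} ⊆ {ω | t < η ω} := fun ω hω =>
          lt_of_lt_of_le hω (Set.indicator_le_self' (fun x _ => hηnn x) ω)
        have hb := (hmeas_le _ _ hsub).trans (hkey xm t ht)
        rwa [hφ, Set.indicator_of_mem (Set.mem_Ioc.mpr ⟨ht, htc⟩)]
      · push_neg at htc
        have hempty : {ω | t < A.indicator η ω} = ∅ := by
          ext ω
          simp only [Set.mem_setOf_eq, Set.mem_empty_iff_false, iff_false, not_lt]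
          by_cases hωA : ω ∈ A
          · rw [Set.indicator_of_mem hωA]
            calc η ω ≤ cm := Real.exp_le_exp.mpr (by
                have : ξ ω ≤ xm := hωA
                nlinarith)
              _ ≤ t := htc.le
          · rw [Set.indicator_of_notMem hωA]; linarith
        rw [hempty, hφ, Set.indicator_of_notMem (by simp [Set.mem_Ioc]; intro h; linarith)]
        simp
    have hint_le : (∫ ω, A.indicator η ω) ≤ ∫ t in Set.Ioi (0:ℝ), φ t := by
      rw [hcover]
      refine integral_mono_of_nonneg ?_ hφint ?_
      · exact Filter.Eventually.of_forall fun t => ENNReal.toReal_nonneg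
      · exact (ae_restrict_mem measurableSet_Ioi).mono hmono
    refine hint_le.trans ?_
    rw [hφ, setIntegral_indicator measurableSet_Ioc,
      Set.inter_eq_self_of_subset_right Set.Ioc_subset_Ioi_self, hψ,
      ← intervalIntegral.integral_of_le hcm0.le, intervalIntegral.integral_const_mul,
      integral_rpow (Or.inl (by linarith : (-1:ℝ) < p - 1))]
    have hsimp : p - 1 + 1 = p := by ring
    rw [hsimp, Real.zero_rpow (ne_of_gt hp0)]
    rw [hcm, Real.rpow_def_of_pos (Real.exp_pos _), Real.log_exp]
    apply le_of_eq
    have hlp : l * xm * p = deriv S xm * xm := by rw [hp]; field_simp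
    rw [sub_zero, hlp, ← mul_div_assoc, ← Real.exp_add]
    have h5 : S xm - deriv S xm * xm + deriv S xm * xm = S xm := by ring
    rw [h5, hp]
    field_simp
  -- the second piece
  have hA2 : (∫ ω, Aᶜ.indicator η ω)
      ≤ cp * (ℙ {ω | xm < ξ ω}).toReal + l * Real.exp (S xp) / |deriv S xp| := by
    set q := deriv S xp / l with hq
    have hq0 : q < 0 := div_neg_of_neg_of_pos hSp hl
    set T := (ℙ {ω | xm < ξ ω}).toReal with hT
    have hT0 : 0 ≤ T := ENNReal.toReal_nonneg
    have hcover : (∫ ω, Aᶜ.indicator η ω)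
        = ∫ t in Set.Ioi (0:ℝ), (ℙ {ω | t < Aᶜ.indicator η ω}).toReal :=
      hf2i.integral_eq_integral_meas_lt
        (Filter.Eventually.of_forall fun ω => Set.indicator_nonneg (fun x _ => hηnn x) ω)
    set ψ : ℝ → ℝ := fun t => Real.exp (S xp - deriv S xp * xp) * t ^ (q - 1) with hψ
    set φ : ℝ → ℝ := fun t =>
      (Set.Ioc (0:ℝ) cp).indicator (fun _ => T) t + (Set.Ioi cp).indicator ψ t with hφ
    have hψint : IntegrableOn ψ (Set.Ioi cp) := by
      apply Integrable.const_mul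
      exact integrableOn_Ioi_rpow_of_lt (by linarith : q - 1 < -1) hcp0
    have hconstint : IntegrableOn (fun _ : ℝ => T) (Set.Ioc (0:ℝ) cp) :=
      integrableOn_const measure_Ioc_lt_top.ne
    have hφint : Integrable φ ((volume : Measure ℝ).restrict (Set.Ioi 0)) := by
      rw [hφ]
      apply Integrable.add
      · rw [integrable_indicator_iff measurableSet_Ioc, IntegrableOn,
          Measure.restrict_restrict measurableSet_Ioc,
          Set.inter_eq_self_of_subset_left Set.Ioc_subset_Ioi_self]
        exact hconstint
      · rw [integrable_indicator_iff measurableSet_Ioi, IntegrableOn,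
          Measure.restrict_restrict measurableSet_Ioi,
          Set.inter_eq_self_of_subset_left (Set.Ioi_subset_Ioi hcp0.le)]
        exact hψint
    have hmono : ∀ t ∈ Set.Ioi (0:ℝ), (ℙ {ω | t < Aᶜ.indicator η ω}).toReal ≤ φ t := by
      intro t ht
      simp only [Set.mem_Ioi] at ht
      by_cases htc : t ≤ cp
      · have hsub : {ω | t < Aᶜ.indicator η ω} ⊆ {ω | xm < ξ ω} := by
          intro ω hω
          simp only [Set.mem_setOf_eq] at hω ⊢
          by_contra hcon
          push_neg at hcon
          have : ω ∈ A := hcon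
          rw [Set.indicator_of_notMem (by simpa using this)] at hω
          linarith
        have hb := hmeas_le _ _ hsub
        show _ ≤ (Set.Ioc (0:ℝ) cp).indicator (fun _ => T) t + (Set.Ioi cp).indicator ψ t
        rw [Set.indicator_of_mem (Set.mem_Ioc.mpr ⟨ht, htc⟩)]
        have h2 : (0:ℝ) ≤ (Set.Ioi cp).indicator ψ t := by
          apply Set.indicator_nonneg
          intro x hx
          have : (0:ℝ) < x := lt_trans hcp0 hx
          positivity
        linarith [hb]
      · push_neg at htc
        have hsub : {ω | t < Aᶜ.indicator η ω} ⊆ {ω | t < η ω} := fun ω hω =>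
          lt_of_lt_of_le hω (Set.indicator_le_self' (fun x _ => hηnn x) ω)
        have hb := (hmeas_le _ _ hsub).trans (hkey xp t ht)
        show _ ≤ (Set.Ioc (0:ℝ) cp).indicator (fun _ => T) t + (Set.Ioi cp).indicator ψ t
        rw [Set.indicator_of_notMem (by simp only [Set.mem_Ioc, not_and, not_le]; intro h; linarith),
          Set.indicator_of_mem (Set.mem_Ioi.mpr htc)]
        simpa using hb
    have hint_le : (∫ ω, Aᶜ.indicator η ω) ≤ ∫ t in Set.Ioi (0:ℝ), φ t := by
      rw [hcover]
      refine integral_mono_of_nonneg ?_ hφint ?_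
      · exact Filter.Eventually.of_forall fun t => ENNReal.toReal_nonneg
      · exact (ae_restrict_mem measurableSet_Ioi).mono hmono
    refine hint_le.trans ?_
    have hint1 : Integrable ((Set.Ioc (0:ℝ) cp).indicator (fun _ => T))
        ((volume : Measure ℝ).restrict (Set.Ioi 0)) := by
      rw [integrable_indicator_iff measurableSet_Ioc, IntegrableOn,
        Measure.restrict_restrict measurableSet_Ioc,
        Set.inter_eq_self_of_subset_left Set.Ioc_subset_Ioi_self]
      exact hconstint
    have hint2 : Integrable ((Set.Ioi cp).indicator ψ)
        ((volume : Measure ℝ).restrict (Set.Ioi 0)) := by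
      rw [integrable_indicator_iff measurableSet_Ioi, IntegrableOn,
        Measure.restrict_restrict measurableSet_Ioi,
        Set.inter_eq_self_of_subset_left (Set.Ioi_subset_Ioi hcp0.le)]
      exact hψint
    simp only [hφ]
    rw [integral_add hint1 hint2]
    have hpart1 : (∫ t in Set.Ioi (0:ℝ), (Set.Ioc (0:ℝ) cp).indicator (fun _ => T) t)
        = cp * T := by
      rw [setIntegral_indicator measurableSet_Ioc,
        Set.inter_eq_self_of_subset_right Set.Ioc_subset_Ioi_self,
        setIntegral_const]
      rw [measureReal_def, Real.volume_Ioc]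
      simp [ENNReal.toReal_ofReal hcp0.le, smul_eq_mul]
    have hpart2 : (∫ t in Set.Ioi (0:ℝ), (Set.Ioi cp).indicator ψ t)
        = l * Real.exp (S xp) / |deriv S xp| := by
      rw [setIntegral_indicator measurableSet_Ioi,
        Set.inter_eq_self_of_subset_right (Set.Ioi_subset_Ioi hcp0.le), hψ,
        MeasureTheory.integral_const_mul,
        integral_Ioi_rpow_of_lt (by linarith : q - 1 < -1) hcp0]
      have hsimp : q - 1 + 1 = q := by ring
      rw [hsimp]
      rw [hcp, Real.rpow_def_of_pos (Real.exp_pos _), Real.log_exp]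
      have hlq : l * xp * q = deriv S xp * xp := by rw [hq]; field_simp
      have habs : |deriv S xp| = -deriv S xp := abs_of_neg hSp
      rw [Real.exp_sub, hlq, habs, hq]
      field_simp
    rw [hpart1, hpart2]
  -- combine
  have hmain : Real.exp φ₁ ≤ l * Real.exp (S xm) / deriv S xm
      + (cp * (ℙ {ω | xm < ξ ω}).toReal + l * Real.exp (S xp) / |deriv S xp|) := by
    calc Real.exp φ₁ ≤ ∫ ω, η ω := hmgf
      _ = (∫ ω, A.indicator η ω) + ∫ ω, Aᶜ.indicator η ω := hsplit
      _ ≤ _ := add_le_add hA1 hA2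
  rw [Real.exp_neg]
  rw [inv_mul_le_iff₀ hcp0]
  linarith
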